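/- arXiv:1812.03788 — 2 statements merged into one kernel-verified Lean document; each statement's English description precedes it below -/
import Mathlib

section
/- Let $p$ be an odd prime, $x > 0$ a real number, and for each even Dirichlet character $\chi$ modulo $p$ let $\theta(x, \chi) = \sum_{n \ge 1} \chi(n) e^{-\pi n^2 x / p}$. Let $w : \{1, \dots, \lfloor\sqrt{p/3}\rfloor\} \to \mathbb{R}_{\ge 0}$ and $M(\chi) = \sum_{m \le \sqrt{p/3}} w(m) \overline{\chi}(m)$. Then $\sum_{\chi \in X_p^+} M(\chi) \theta(x, \chi) \ge \tfrac{p-1}{2} \sum_{m \le \sqrt{p/3}} w(m) e^{-\pi m^2 x / p}$ (in particular this sum is a nonnegative real number). -/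
open Finset

lemma aux_summable_exp (p : ℕ) (x : ℝ) (hp : 0 < p) (hx : 0 < x) :
    Summable fun n : ℕ => Real.exp (-Real.pi * n ^ 2 * x / p) := by
  have hp' : (0 : ℝ) < p := by exact_mod_cast hp
  set c : ℝ := Real.pi * x / p with hc
  have hc0 : 0 < c := by positivity
  refine Summable.of_nonneg_of_le (fun n => (Real.exp_pos _).le) (fun n => ?_)
    (summable_geometric_of_lt_one (Real.exp_pos (-c)).le ?_)
  · rw [← Real.exp_nat_mul]
    apply Real.exp_le_exp.mpr
    have hn : (n : ℝ) ≤ (n : ℝ) ^ 2 := by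
      exact_mod_cast Nat.cast_le.mpr (Nat.le_self_pow two_ne_zero n)
    have h1 : -Real.pi * (n : ℝ) ^ 2 * x / p = -(c * n ^ 2) := by rw [hc]; ring
    have h2 : (n : ℝ) * -c = -(c * n) := by ring
    rw [h1, h2, neg_le_neg_iff]
    nlinarith
  · rw [Real.exp_lt_one_iff]
    linarith

open Classical in
lemma aux_conj {p : ℕ} [Fact p.Prime] (χ : DirichletCharacter ℂ p) {a : ZMod p}
    (ha : IsUnit a) : (starRingEnd ℂ) (χ a) = χ a⁻¹ := by
  have hn : ‖χ a‖ = 1 := by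
    have := χ.unit_norm_eq_one ha.unit
    rwa [IsUnit.unit_spec] at this
  have h0 : χ a ≠ 0 := by
    intro h
    rw [h, norm_zero] at hn
    norm_num at hn
  have h1 : χ a⁻¹ * χ a = 1 := by
    rw [← map_mul, ZMod.inv_mul_of_unit a ha, map_one]
  have h2 : (starRingEnd ℂ) (χ a) * χ a = 1 := by
    rw [mul_comm, Complex.mul_conj]
    rw [Complex.normSq_eq_norm_sq, hn]
    norm_num
  exact mul_right_cancel₀ h0 (h2.trans h1.symm)

open Classical in
lemma aux_orth {p : ℕ} [Fact p.Prime] (hp : p ≠ 2) {a : ZMod p} (ha : IsUnit a) (n : ℕ) :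
    (∑ χ : DirichletCharacter ℂ p, if χ (-1) = 1 then (starRingEnd ℂ) (χ a) * χ n else 0)
      = ((((p : ℝ) - 1) / 2 *
          ((if ((n : ZMod p)) = a then 1 else 0) + (if ((n : ZMod p)) = -a then 1 else 0)) : ℝ)
          : ℂ) := by
  have hP : p.Prime := Fact.out
  have step : ∀ χ : DirichletCharacter ℂ p,
      (if χ (-1) = 1 then (starRingEnd ℂ) (χ a) * χ n else 0)
        = (χ (a⁻¹ * n) + χ (-(a⁻¹ * n))) / 2 := by
    intro χ
    have hsq : χ (-1) ^ 2 = 1 := by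
      rw [← map_pow]
      norm_num
    have hneg : χ (-(a⁻¹ * (n : ZMod p))) = χ (-1) * χ (a⁻¹ * n) := by
      rw [← map_mul, neg_one_mul]
    rcases sq_eq_one_iff.mp hsq with h | h
    · rw [if_pos h, aux_conj χ ha, ← map_mul, hneg, h, one_mul]
      ring
    · have hne : χ (-1) ≠ 1 := by
        rw [h]
        intro hh
        norm_num at hh
      rw [if_neg hne, hneg, h]
      ring
  rw [Finset.sum_congr rfl (fun χ _ => step χ), ← Finset.sum_div, Finset.sum_add_distrib,
    DirichletCharacter.sum_characters_eq, DirichletCharacter.sum_characters_eq]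
  have htot : (p.totient : ℂ) = (p : ℂ) - 1 := by
    rw [Nat.totient_prime hP]
    have h1p : 1 ≤ p := hP.one_lt.le
    push_cast [Nat.cast_sub h1p]
    ring
  have h1 : ((a⁻¹ * (n : ZMod p)) = 1) ↔ ((n : ZMod p) = a) := by
    rw [ZMod.inv_mul_eq_one_of_isUnit ha]
    exact eq_comm
  have h2 : (-(a⁻¹ * (n : ZMod p)) = 1) ↔ ((n : ZMod p) = -a) := by
    rw [← mul_neg, ZMod.inv_mul_eq_one_of_isUnit ha]
    constructor
    · intro h; rw [h, neg_neg]
    · intro h; rw [h, neg_neg]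
  simp only [h1, h2, htot]
  split_ifs <;> push_cast <;> ring

open Classical in
theorem stmt_9 (p : ℕ) [Fact p.Prime] (hp : p ≠ 2) (x : ℝ) (hx : 0 < x)
    (w : ℕ → ℝ) (hw : ∀ m, 0 ≤ w m) :
    ∃ r : ℝ,
      (∑ χ : DirichletCharacter ℂ p,
          if χ (-1) = 1 then
            (∑ m ∈ Icc 1 ⌊Real.sqrt (p / 3)⌋₊, (w m : ℂ) * (starRingEnd ℂ) (χ m)) *
              (∑' n : ℕ, χ n * (Real.exp (-Real.pi * n ^ 2 * x / p) : ℂ))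
          else 0) = (r : ℂ) ∧
      ((p : ℝ) - 1) / 2 *
          ∑ m ∈ Icc 1 ⌊Real.sqrt (p / 3)⌋₊, w m * Real.exp (-Real.pi * m ^ 2 * x / p) ≤ r := by
  have hP : p.Prime := Fact.out
  have hp3 : 3 ≤ p := by
    have := hP.two_le
    omega
  have hp0 : (0 : ℝ) < p := by exact_mod_cast hP.pos
  set N := ⌊Real.sqrt (p / 3)⌋₊ with hN
  set E : ℕ → ℝ := fun n => Real.exp (-Real.pi * n ^ 2 * x / p) with hE
  have hEsum : Summable E := aux_summable_exp p x hP.pos hx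
  have hEpos : ∀ n, 0 < E n := fun n => Real.exp_pos _
  -- every m in the range is a unit mod p
  have hNp : N < p := by
    have h1 : (N : ℝ) ≤ Real.sqrt (p / 3) := Nat.floor_le (Real.sqrt_nonneg _)
    have h2 : Real.sqrt ((p : ℝ) / 3) ≤ Real.sqrt p := by
      apply Real.sqrt_le_sqrt
      linarith
    have h3 : Real.sqrt p < p := by
      have h1 : (1 : ℝ) < p := by exact_mod_cast hP.one_lt
      nlinarith [Real.sq_sqrt hp0.le, Real.sqrt_nonneg (p : ℝ)]
    exact_mod_cast lt_of_le_of_lt h1 (lt_of_le_of_lt h2 h3)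
  have hunit : ∀ m ∈ Icc 1 N, IsUnit ((m : ZMod p)) := by
    intro m hm
    rw [mem_Icc] at hm
    rw [ZMod.isUnit_iff_coprime]
    exact (hP.coprime_iff_not_dvd.mpr
      (Nat.not_dvd_of_pos_of_lt (by omega) (lt_of_le_of_lt hm.2 hNp))).symm
  set d : ℕ → ℕ → ℝ := fun m n =>
    (if (n : ZMod p) = (m : ZMod p) then 1 else 0) +
      (if (n : ZMod p) = -(m : ZMod p) then 1 else 0) with hd
  have hd0 : ∀ m n, 0 ≤ d m n := by
    intro m n
    simp only [hd]
    split_ifs <;> norm_num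
  have hd2 : ∀ m n, d m n ≤ 2 := by
    intro m n
    simp only [hd]
    split_ifs <;> norm_num
  have hdsum : ∀ m, Summable fun n => d m n * E n := by
    intro m
    refine Summable.of_nonneg_of_le (fun n => mul_nonneg (hd0 m n) (hEpos n).le)
      (fun n => ?_) (hEsum.mul_left 2)
    exact mul_le_mul_of_nonneg_right (hd2 m n) (hEpos n).le
  have hS : ∀ χ : DirichletCharacter ℂ p, Summable fun n : ℕ => χ n * (E n : ℂ) := by
    intro χ
    apply Summable.of_norm
    refine Summable.of_nonneg_of_le (fun n => norm_nonneg _) (fun n => ?_) hEsum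
    rw [norm_mul, Complex.norm_real, Real.norm_eq_abs, abs_of_pos (hEpos n)]
    calc ‖χ (n : ZMod p)‖ * E n ≤ 1 * E n :=
          mul_le_mul_of_nonneg_right (χ.norm_le_one _) (hEpos n).le
      _ = E n := one_mul _
  refine ⟨∑ m ∈ Icc 1 N, w m * (((p : ℝ) - 1) / 2 * ∑' n, d m n * E n), ?_, ?_⟩
  · calc (∑ χ : DirichletCharacter ℂ p,
          if χ (-1) = 1 then
            (∑ m ∈ Icc 1 N, (w m : ℂ) * (starRingEnd ℂ) (χ m)) *
              (∑' n : ℕ, χ n * (E n : ℂ))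
          else 0)
        = ∑ χ : DirichletCharacter ℂ p, ∑ m ∈ Icc 1 N,
            (if χ (-1) = 1 then
              (w m : ℂ) * ((starRingEnd ℂ) (χ m) * ∑' n : ℕ, χ n * (E n : ℂ)) else 0) := by
          apply Finset.sum_congr rfl
          intro χ _
          split_ifs with h
          · rw [Finset.sum_mul]
            apply Finset.sum_congr rfl
            intro m _
            ring
          · simp
      _ = ∑ m ∈ Icc 1 N, (w m : ℂ) * ∑ χ : DirichletCharacter ℂ p,
            (if χ (-1) = 1 then
              (starRingEnd ℂ) (χ m) * ∑' n : ℕ, χ n * (E n : ℂ) else 0) := by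
          rw [Finset.sum_comm]
          apply Finset.sum_congr rfl
          intro m _
          rw [Finset.mul_sum]
          apply Finset.sum_congr rfl
          intro χ _
          split_ifs <;> simp
      _ = ∑ m ∈ Icc 1 N, (w m : ℂ) * ∑' n : ℕ, (∑ χ : DirichletCharacter ℂ p,
            (if χ (-1) = 1 then (starRingEnd ℂ) (χ m) * (χ n * (E n : ℂ)) else 0)) := by
          apply Finset.sum_congr rfl
          intro m _
          congr 1
          have hsum : ∀ χ ∈ (Finset.univ : Finset (DirichletCharacter ℂ p)),
              Summable fun n : ℕ =>
                (if χ (-1) = 1 then (starRingEnd ℂ) (χ m) * (χ n * (E n : ℂ)) else 0) := by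
            intro χ _
            by_cases h : χ (-1) = 1
            · simp only [if_pos h]
              exact (hS χ).mul_left _
            · simp only [if_neg h]
              exact summable_zero
          rw [Summable.tsum_finsetSum hsum]
          apply Finset.sum_congr rfl
          intro χ _
          by_cases h : χ (-1) = 1
          · simp only [if_pos h]
            exact tsum_mul_left.symm
          · simp [h]
      _ = ∑ m ∈ Icc 1 N, (w m : ℂ) *
            ∑' n : ℕ, ((((p : ℝ) - 1) / 2 * d m n : ℝ) : ℂ) * (E n : ℂ) := by
          apply Finset.sum_congr rfl
          intro m hm
          congr 1
          apply tsum_congr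
          intro n
          have key : (∑ χ : DirichletCharacter ℂ p,
              (if χ (-1) = 1 then (starRingEnd ℂ) (χ m) * (χ n * (E n : ℂ)) else 0))
                = (∑ χ : DirichletCharacter ℂ p,
                  (if χ (-1) = 1 then (starRingEnd ℂ) (χ m) * χ n else 0)) * (E n : ℂ) := by
            rw [Finset.sum_mul]
            apply Finset.sum_congr rfl
            intro χ _
            split_ifs
            · ring
            · rw [zero_mul]
          rw [key, aux_orth hp (hunit m hm) n]
      _ = ((∑ m ∈ Icc 1 N, w m * (((p : ℝ) - 1) / 2 * ∑' n, d m n * E n) : ℝ) : ℂ) := by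
          rw [Complex.ofReal_sum]
          apply Finset.sum_congr rfl
          intro m _
          rw [Complex.ofReal_mul, Complex.ofReal_mul, Complex.ofReal_tsum]
          congr 1
          rw [← tsum_mul_left]
          apply tsum_congr
          intro n
          push_cast
          ring
  · have hC : (0 : ℝ) ≤ ((p : ℝ) - 1) / 2 := by
      have : (1 : ℝ) ≤ p := by exact_mod_cast hP.one_lt.le
      linarith
    rw [Finset.mul_sum]
    apply Finset.sum_le_sum
    intro m hm
    have hEt : E m ≤ ∑' n, d m n * E n := by
      have hdmm : d m m = 1 := by
        have hne : ((m : ZMod p)) ≠ -((m : ZMod p)) := by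
          intro h
          have h2 : (2 : ZMod p) * (m : ZMod p) = 0 := by
            have := sub_eq_zero_of_eq h
            rw [sub_neg_eq_add] at this
            rw [two_mul, this]
          rcases mul_eq_zero.mp h2 with h3 | h3
          · have : ((2 : ℕ) : ZMod p) = 0 := by exact_mod_cast h3
            rw [ZMod.natCast_eq_zero_iff] at this
            have := Nat.le_of_dvd (by norm_num) this
            omega
          · exact (hunit m hm).ne_zero h3
        simp [hd, hne]
      calc E m = d m m * E m := by rw [hdmm, one_mul]
        _ ≤ ∑' n, d m n * E n :=
            Summable.le_tsum (hdsum m) m (fun n _ => mul_nonneg (hd0 m n) (hEpos n).le)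
    calc ((p : ℝ) - 1) / 2 * (w m * E m) = w m * (((p : ℝ) - 1) / 2 * E m) := by ring
      _ ≤ w m * (((p : ℝ) - 1) / 2 * ∑' n, d m n * E n) :=
          mul_le_mul_of_nonneg_left (mul_le_mul_of_nonneg_left hEt hC) (hw m)
end

section
/- Let $p$ be prime and $A, N, M$ positive integers with $A \le N$ and $AN \le p$. For a weight $w : \{1,\dots,A\} \to \mathbb{C}$, define $T_w(M, N, A) = \sum_{a_1, a_2 \le A} w(a_1) w(a_2) \, T(a_1, a_2; M, N)$ where $T(a_1, a_2; M, N)$ counts pairs $(n_1, n_2)$ with $M < n_1, n_2 \le M + N$ and $n_1 a_1 \equiv n_2 a_2 \pmod p$. Then $|T_w(M, N, A)| \ll \Big( \sum_{a \le A} |w(a)| \Big)^2 + N \sum_{a_1, a_2 \le A} |w(a_1) w(a_2)| \frac{\gcd(a_1, a_2)}{a_1 + a_2},$ with an absolute implied constant. -/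
set_option maxHeartbeats 1000000

open Finset

namespace Stmt13Aux

lemma count_cong (M N d : ℕ) (hd : 0 < d) (s : Finset ℕ)
    (hs : s ⊆ Ioc M (M + N))
    (hcong : ∀ x ∈ s, ∀ y ∈ s, x ≤ y → d ∣ y - x) : s.card ≤ N / d + 1 := by
  classical
  have key : s.card ≤ (Finset.range ((N - 1) / d + 1)).card := by
    apply Finset.card_le_card_of_injOn (fun x => (x - (M + 1)) / d)
    · intro x hx
      have hx' := hs hx
      simp only [mem_Ioc] at hx'
      simp only [Finset.mem_range]
      have : x - (M + 1) ≤ N - 1 := by omega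
      exact Finset.mem_coe.mpr (Finset.mem_range.mpr (Nat.lt_succ_of_le (Nat.div_le_div_right this)))
    · intro x hx y hy hxy
      simp only at hxy
      wlog hle : x ≤ y generalizing x y
      · exact (this hy hx hxy.symm (by omega)).symm
      have hdvd : d ∣ y - x := hcong x hx y hy hle
      have hx' := hs hx; have hy' := hs hy
      simp only [mem_Ioc] at hx' hy'
      have hdvd' : d ∣ (y - (M + 1)) - (x - (M + 1)) := by
        have : (y - (M + 1)) - (x - (M + 1)) = y - x := by omega
        rw [this]; exact hdvd
      set a := x - (M + 1) with ha
      set b := y - (M + 1) with hb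
      have hab : a ≤ b := by omega
      have hmod : a % d = b % d := (Nat.modEq_iff_dvd' hab).mpr hdvd'
      have h1 := Nat.div_add_mod a d
      rw [show a / d = b / d from hxy] at h1
      have h2 := Nat.div_add_mod b d
      have : a = b := by omega
      omega
  simpa using key.trans (by
    simp only [Finset.card_range]
    exact Nat.add_le_add_right (Nat.div_le_div_right (by omega)) 1)

lemma fiber_bound (M N a₁ a₂ : ℕ) (h1 : 0 < a₁) (h2 : 0 < a₂) (c : ℤ)
    (F : Finset (ℕ × ℕ)) (hF : F ⊆ Ioc M (M + N) ×ˢ Ioc M (M + N))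
    (heq : ∀ q ∈ F, (a₁ : ℤ) * q.1 - (a₂ : ℤ) * q.2 = c) :
    F.card ≤ N / (a₂ / Nat.gcd a₁ a₂) + 1 := by
  classical
  set g := Nat.gcd a₁ a₂ with hg
  have hgpos : 0 < g := Nat.gcd_pos_of_pos_left _ h1
  have hb2 : 0 < a₂ / g := Nat.div_pos (Nat.le_of_dvd h2 (Nat.gcd_dvd_right _ _)) hgpos
  have hinj : Set.InjOn Prod.fst (F : Set (ℕ × ℕ)) := by
    intro q hq q' hq' h
    have e1 := heq q hq
    have e2 := heq q' hq'
    have h2' : (a₂ : ℤ) * q.2 = (a₂ : ℤ) * q'.2 := by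
      have : (a₁ : ℤ) * q.1 = (a₁ : ℤ) * q'.1 := by rw [h]
      linarith
    have : (q.2 : ℤ) = (q'.2 : ℤ) := by
      have ha : (a₂ : ℤ) ≠ 0 := by exact_mod_cast h2.ne'
      exact mul_left_cancel₀ ha h2'
    have : q.2 = q'.2 := by exact_mod_cast this
    exact Prod.ext h this
  rw [← Finset.card_image_of_injOn hinj]
  apply count_cong M N _ hb2
  · intro x hx
    simp only [Finset.mem_image] at hx
    obtain ⟨q, hq, rfl⟩ := hx
    exact (Finset.mem_product.mp (hF hq)).1
  · intro x hx y hy hxy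
    simp only [Finset.mem_image] at hx hy
    obtain ⟨q, hq, rfl⟩ := hx
    obtain ⟨r, hr, rfl⟩ := hy
    have e1 := heq q hq
    have e2 := heq r hr
    -- a₁ * (r.1 - q.1) = a₂ * (r.2 - q.2)
    have key : (a₁ : ℤ) * ((r.1 : ℤ) - q.1) = (a₂ : ℤ) * ((r.2 : ℤ) - q.2) := by ring_nf; linarith
    have hd1 : (a₁ : ℤ) = (g : ℤ) * (a₁ / g : ℕ) := by
      rw [← Nat.cast_mul]; exact_mod_cast (Nat.mul_div_cancel' (Nat.gcd_dvd_left a₁ a₂)).symm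
    have hd2 : (a₂ : ℤ) = (g : ℤ) * (a₂ / g : ℕ) := by
      rw [← Nat.cast_mul]; exact_mod_cast (Nat.mul_div_cancel' (Nat.gcd_dvd_right a₁ a₂)).symm
    have key2 : ((a₁ / g : ℕ) : ℤ) * ((r.1 : ℤ) - q.1) = ((a₂ / g : ℕ) : ℤ) * ((r.2 : ℤ) - q.2) := by
      have hgz : (g : ℤ) ≠ 0 := by exact_mod_cast hgpos.ne'
      apply mul_left_cancel₀ hgz
      rw [← mul_assoc, ← mul_assoc, ← hd1, ← hd2]
      exact key
    have hcop : IsCoprime ((a₂ / g : ℕ) : ℤ) ((a₁ / g : ℕ) : ℤ) := by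
      rw [Int.isCoprime_iff_gcd_eq_one]
      exact_mod_cast (Nat.coprime_div_gcd_div_gcd hgpos).symm
    have hdvd : ((a₂ / g : ℕ) : ℤ) ∣ ((a₁ / g : ℕ) : ℤ) * ((r.1 : ℤ) - q.1) :=
      key2 ▸ Dvd.intro _ rfl
    have hdvd2 : ((a₂ / g : ℕ) : ℤ) ∣ ((r.1 : ℤ) - q.1) := hcop.dvd_of_dvd_mul_left hdvd
    have : ((a₂ / g : ℕ) : ℤ) ∣ ((r.1 - q.1 : ℕ) : ℤ) := by
      rwa [Int.ofNat_sub hxy]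
    exact_mod_cast this

lemma T_bound (p a₁ a₂ N M : ℕ) (hp : 0 < p) (h1 : 0 < a₁) (h2 : 0 < a₂)
    (hNp : (a₁ + a₂) * N ≤ 2 * p) :
    ((Ioc M (M + N) ×ˢ Ioc M (M + N)).filter
        (fun q : ℕ × ℕ =>
          (q.1 : ZMod p) * (a₁ : ZMod p) = (q.2 : ZMod p) * (a₂ : ZMod p))).card ≤
      3 * (N / (a₂ / Nat.gcd a₁ a₂) + 1) := by
  classical
  set S := (Ioc M (M + N) ×ˢ Ioc M (M + N)).filter
        (fun q : ℕ × ℕ =>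
          (q.1 : ZMod p) * (a₁ : ZMod p) = (q.2 : ZMod p) * (a₂ : ZMod p)) with hS
  have hpz : (p : ℤ) ≠ 0 := by exact_mod_cast hp.ne'
  have hpZ : (0 : ℤ) < p := by exact_mod_cast hp
  set v : ℕ × ℕ → ℤ := fun q => (a₁ : ℤ) * q.1 - (a₂ : ℤ) * q.2 with hv
  have hdvd : ∀ q ∈ S, (p : ℤ) ∣ v q := by
    intro q hq
    simp only [hS, Finset.mem_filter] at hq
    have h' : ((q.1 * a₁ : ℕ) : ZMod p) = ((q.2 * a₂ : ℕ) : ZMod p) := by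
      push_cast; exact hq.2
    rw [ZMod.natCast_eq_natCast_iff] at h'
    have := (Nat.modEq_iff_dvd).mp h'
    have h2' : (p : ℤ) ∣ (q.1 : ℤ) * a₁ - (q.2 : ℤ) * a₂ := by
      push_cast at this
      exact dvd_sub_comm.mp this
    simpa [hv, mul_comm] using h2'
  set L : ℤ := (a₁ : ℤ) * (M + 1) - (a₂ : ℤ) * (M + N) with hL
  set U : ℤ := (a₁ : ℤ) * (M + N) - (a₂ : ℤ) * (M + 1) with hU
  have hrange : ∀ q ∈ S, L ≤ v q ∧ v q ≤ U := by
    intro q hq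
    simp only [hS, Finset.mem_filter, Finset.mem_product, Finset.mem_Ioc] at hq
    obtain ⟨⟨⟨hq11, hq12⟩, hq21, hq22⟩, -⟩ := hq
    have c11 : (M : ℤ) + 1 ≤ q.1 := by exact_mod_cast hq11
    have c12 : (q.1 : ℤ) ≤ M + N := by exact_mod_cast hq12
    have c21 : (M : ℤ) + 1 ≤ q.2 := by exact_mod_cast hq21
    have c22 : (q.2 : ℤ) ≤ M + N := by exact_mod_cast hq22
    have ha1 : (0 : ℤ) ≤ a₁ := by positivity
    have ha2 : (0 : ℤ) ≤ a₂ := by positivity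
    constructor
    · simp only [hv, hL]
      have t1 : (a₁ : ℤ) * (M + 1) ≤ a₁ * q.1 := by nlinarith
      have t2 : (a₂ : ℤ) * q.2 ≤ a₂ * (M + N) := by nlinarith
      linarith
    · simp only [hv, hU]
      have t1 : (a₁ : ℤ) * q.1 ≤ a₁ * (M + N) := by nlinarith
      have t2 : (a₂ : ℤ) * (M + 1) ≤ a₂ * q.2 := by nlinarith
      linarith
  have hfib : S.card = ∑ k ∈ Finset.Icc (L / p) (U / p), (S.filter (fun q => v q / p = k)).card := by
    apply Finset.card_eq_sum_card_fiberwise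
    intro q hq
    obtain ⟨hl, hu⟩ := hrange q hq
    rw [Finset.mem_coe, Finset.mem_Icc]
    exact ⟨Int.ediv_le_ediv hpZ hl, Int.ediv_le_ediv hpZ hu⟩
  rw [hfib]
  have hcard3 : (Finset.Icc (L / p) (U / p)).card ≤ 3 := by
    rw [Int.card_Icc]
    have hUL : U - L ≤ 2 * p := by
      have hc : ((a₁ : ℤ) + a₂) * N ≤ 2 * p := by exact_mod_cast hNp
      have he : U - L = ((a₁ : ℤ) + a₂) * ((N : ℤ) - 1) := by simp only [hU, hL]; ring
      have hnn : (0 : ℤ) ≤ (a₁ : ℤ) + a₂ := by positivity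
      have hm : ((a₁ : ℤ) + a₂) * ((N : ℤ) - 1) ≤ ((a₁ : ℤ) + a₂) * N :=
        mul_le_mul_of_nonneg_left (by linarith) hnn
      linarith
    have e1 := Int.mul_ediv_add_emod U p
    have e2 := Int.mul_ediv_add_emod L p
    have m1 : 0 ≤ U % p := Int.emod_nonneg U hpz
    have m2 : L % p < p := Int.emod_lt_of_pos L hpZ
    have hexp : (p : ℤ) * (U / p - L / p) = p * (U / p) - p * (L / p) := by ring
    have key : (p : ℤ) * (U / p - L / p) < p * 3 := by
      rw [hexp]; linarith
    have : U / p - L / p < 3 := lt_of_mul_lt_mul_left key hpZ.le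
    omega
  calc ∑ k ∈ Finset.Icc (L / p) (U / p), (S.filter (fun q => v q / p = k)).card
      ≤ ∑ _k ∈ Finset.Icc (L / p) (U / p), (N / (a₂ / Nat.gcd a₁ a₂) + 1) := by
        apply Finset.sum_le_sum
        intro k _
        apply fiber_bound M N a₁ a₂ h1 h2 (p * k)
        · exact (Finset.filter_subset _ _).trans (Finset.filter_subset _ _)
        · intro q hq
          simp only [Finset.mem_filter] at hq
          have hd := hdvd q hq.1
          have : v q / p * p = v q := Int.ediv_mul_cancel hd
          rw [hq.2] at this
          show v q = (p : ℤ) * k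
          rw [← this]; ring
    _ ≤ 3 * (N / (a₂ / Nat.gcd a₁ a₂) + 1) := by
        rw [Finset.sum_const, smul_eq_mul]
        exact Nat.mul_le_mul_right _ hcard3

lemma T_symm (p a₁ a₂ N M : ℕ) :
    ((Ioc M (M + N) ×ˢ Ioc M (M + N)).filter
        (fun q : ℕ × ℕ =>
          (q.1 : ZMod p) * (a₁ : ZMod p) = (q.2 : ZMod p) * (a₂ : ZMod p))).card =
    ((Ioc M (M + N) ×ˢ Ioc M (M + N)).filter
        (fun q : ℕ × ℕ =>
          (q.1 : ZMod p) * (a₂ : ZMod p) = (q.2 : ZMod p) * (a₁ : ZMod p))).card := by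
  apply Finset.card_nbij (fun q => q.swap)
  · intro q hq
    simp only [Finset.mem_coe, Finset.mem_filter, Finset.mem_product, Finset.mem_Ioc] at hq ⊢
    exact ⟨⟨hq.1.2, hq.1.1⟩, hq.2.symm⟩
  · intro q hq q' hq' h
    exact Prod.swap_injective h
  · intro q hq
    refine ⟨q.swap, ?_, Prod.swap_swap q⟩
    simp only [Finset.mem_coe, Finset.mem_filter, Finset.mem_product, Finset.mem_Ioc] at hq ⊢
    exact ⟨⟨hq.1.2, hq.1.1⟩, hq.2.symm⟩

-- real bound helper: nat-div bound to real bound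

lemma step_real (N a b : ℕ) (ha : 0 < a) (hb : 0 < b) (hab : a ≤ b) :
    ((3 * (N / (b / Nat.gcd a b) + 1) : ℕ) : ℝ) ≤
      3 + 6 * N * (Nat.gcd a b : ℝ) / (a + b) := by
  set g := Nat.gcd a b with hg
  have hgpos : 0 < g := Nat.gcd_pos_of_pos_left _ ha
  have hgb : g ∣ b := Nat.gcd_dvd_right a b
  have hd : 0 < b / g := Nat.div_pos (Nat.le_of_dvd hb hgb) hgpos
  have h1 : ((N / (b / g) : ℕ) : ℝ) ≤ (N : ℝ) / ((b / g : ℕ) : ℝ) := Nat.cast_div_le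
  have h2 : ((b / g : ℕ) : ℝ) = (b : ℝ) / g := by
    rw [Nat.cast_div hgb (by exact_mod_cast hgpos.ne')]
  have hbR : (0 : ℝ) < b := by exact_mod_cast hb
  have hgR : (0 : ℝ) < g := by exact_mod_cast hgpos
  have habR : (a : ℝ) + b ≤ 2 * b := by
    have : (a : ℝ) ≤ b := by exact_mod_cast hab
    linarith
  have hsum : (0 : ℝ) < (a : ℝ) + b := by positivity
  have h3 : (N : ℝ) / ((b : ℝ) / g) = N * g / b := by field_simp
  have h4 : (N : ℝ) * g / b ≤ 2 * (N * g) / (a + b) := by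
    rw [div_le_div_iff₀ hbR hsum]
    have hNg : (0 : ℝ) ≤ (N : ℝ) * g := by positivity
    nlinarith
  have h5 : ((N / (b / g) : ℕ) : ℝ) ≤ 2 * (N * g) / ((a : ℝ) + b) := by
    rw [h2, h3] at h1
    exact h1.trans h4
  push_cast
  have h6 : 6 * (N : ℝ) * g / ((a : ℝ) + b) = 3 * (2 * ((N : ℝ) * g) / ((a : ℝ) + b)) := by
    ring
  linarith

lemma T_real (p A a₁ a₂ N M : ℕ) (hp : 0 < p) (h1 : 0 < a₁) (h1A : a₁ ≤ A)
    (h2 : 0 < a₂) (h2A : a₂ ≤ A) (hAN : A * N ≤ p) :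
    ((((Ioc M (M + N) ×ˢ Ioc M (M + N)).filter
        (fun q : ℕ × ℕ =>
          (q.1 : ZMod p) * (a₁ : ZMod p) = (q.2 : ZMod p) * (a₂ : ZMod p))).card : ℕ) : ℝ) ≤
      3 + 6 * N * (Nat.gcd a₁ a₂ : ℝ) / ((a₁ : ℝ) + a₂) := by
  have hNp : (a₁ + a₂) * N ≤ 2 * p := by
    calc (a₁ + a₂) * N ≤ (2 * A) * N := Nat.mul_le_mul_right _ (by omega)
      _ = 2 * (A * N) := by ring
      _ ≤ 2 * p := by omega
  rcases le_total a₁ a₂ with hle | hle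
  · have hb := T_bound p a₁ a₂ N M hp h1 h2 hNp
    have := step_real N a₁ a₂ h1 h2 hle
    calc ((((Ioc M (M + N) ×ˢ Ioc M (M + N)).filter
        (fun q : ℕ × ℕ =>
          (q.1 : ZMod p) * (a₁ : ZMod p) = (q.2 : ZMod p) * (a₂ : ZMod p))).card : ℕ) : ℝ)
        ≤ ((3 * (N / (a₂ / Nat.gcd a₁ a₂) + 1) : ℕ) : ℝ) := by exact_mod_cast hb
      _ ≤ 3 + 6 * N * (Nat.gcd a₁ a₂ : ℝ) / ((a₁ : ℝ) + a₂) := this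
  · have hb := T_bound p a₂ a₁ N M hp h2 h1 (by rwa [Nat.add_comm a₂ a₁])
    rw [T_symm p a₁ a₂ N M]
    have hs := step_real N a₂ a₁ h2 h1 hle
    calc ((((Ioc M (M + N) ×ˢ Ioc M (M + N)).filter
        (fun q : ℕ × ℕ =>
          (q.1 : ZMod p) * (a₂ : ZMod p) = (q.2 : ZMod p) * (a₁ : ZMod p))).card : ℕ) : ℝ)
        ≤ ((3 * (N / (a₁ / Nat.gcd a₂ a₁) + 1) : ℕ) : ℝ) := by exact_mod_cast hb
      _ ≤ 3 + 6 * N * (Nat.gcd a₂ a₁ : ℝ) / ((a₂ : ℝ) + a₁) := hs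
      _ = 3 + 6 * N * (Nat.gcd a₁ a₂ : ℝ) / ((a₁ : ℝ) + a₂) := by
          rw [Nat.gcd_comm, add_comm ((a₂ : ℝ)) a₁]

end Stmt13Aux

open Stmt13Aux in
open Classical in
theorem stmt_13 :
    ∃ C : ℝ, 0 < C ∧
      ∀ (p A N M : ℕ) (w : ℕ → ℂ), p.Prime → 0 < A → 0 < N → 0 < M →
        A ≤ N → A * N ≤ p →
        norm
            (∑ a₁ ∈ Icc 1 A, ∑ a₂ ∈ Icc 1 A, w a₁ * w a₂ *
              (((Ioc M (M + N) ×ˢ Ioc M (M + N)).filter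
                (fun q : ℕ × ℕ =>
                  (q.1 : ZMod p) * (a₁ : ZMod p) = (q.2 : ZMod p) * (a₂ : ZMod p))).card : ℂ)) ≤
          C * ((∑ a ∈ Icc 1 A, norm (w a)) ^ 2 +
            (N : ℝ) * ∑ a₁ ∈ Icc 1 A, ∑ a₂ ∈ Icc 1 A,
              norm (w a₁ * w a₂) * (Nat.gcd a₁ a₂ : ℝ) / (a₁ + a₂)) := by
  refine ⟨6, by norm_num, ?_⟩
  intro p A N M w hp hA hN hM hAN hANp
  have hppos : 0 < p := hp.pos
  set T : ℕ → ℕ → ℕ := fun a₁ a₂ => ((Ioc M (M + N) ×ˢ Ioc M (M + N)).filter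
      (fun q : ℕ × ℕ => (q.1 : ZMod p) * (a₁ : ZMod p) = (q.2 : ZMod p) * (a₂ : ZMod p))).card
    with hT
  have step1 : norm (∑ a₁ ∈ Icc 1 A, ∑ a₂ ∈ Icc 1 A, w a₁ * w a₂ * (T a₁ a₂ : ℂ)) ≤
      ∑ a₁ ∈ Icc 1 A, ∑ a₂ ∈ Icc 1 A, norm (w a₁) * norm (w a₂) * (T a₁ a₂ : ℝ) := by
    refine (norm_sum_le _ _).trans (Finset.sum_le_sum fun a₁ _ => ?_)
    refine (norm_sum_le _ _).trans (Finset.sum_le_sum fun a₂ _ => ?_)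
    rw [norm_mul, norm_mul, Complex.norm_natCast]
  have step2 : ∑ a₁ ∈ Icc 1 A, ∑ a₂ ∈ Icc 1 A,
        norm (w a₁) * norm (w a₂) * (T a₁ a₂ : ℝ) ≤
      ∑ a₁ ∈ Icc 1 A, ∑ a₂ ∈ Icc 1 A, norm (w a₁) * norm (w a₂) *
        (3 + 6 * N * (Nat.gcd a₁ a₂ : ℝ) / ((a₁ : ℝ) + a₂)) := by
    refine Finset.sum_le_sum fun a₁ h₁ => Finset.sum_le_sum fun a₂ h₂ => ?_
    simp only [mem_Icc] at h₁ h₂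
    exact mul_le_mul_of_nonneg_left
      (T_real p A a₁ a₂ N M hppos h₁.1 h₁.2 h₂.1 h₂.2 hANp) (by positivity)
  have step3 : ∑ a₁ ∈ Icc 1 A, ∑ a₂ ∈ Icc 1 A, norm (w a₁) * norm (w a₂) *
        (3 + 6 * N * (Nat.gcd a₁ a₂ : ℝ) / ((a₁ : ℝ) + a₂)) =
      3 * (∑ a ∈ Icc 1 A, norm (w a)) ^ 2 +
      6 * ((N : ℝ) * ∑ a₁ ∈ Icc 1 A, ∑ a₂ ∈ Icc 1 A,
        norm (w a₁ * w a₂) * (Nat.gcd a₁ a₂ : ℝ) / (a₁ + a₂)) := by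
    have expand : ∀ a₁ a₂ : ℕ, norm (w a₁) * norm (w a₂) *
        (3 + 6 * N * (Nat.gcd a₁ a₂ : ℝ) / ((a₁ : ℝ) + a₂)) =
        3 * (norm (w a₁) * norm (w a₂)) +
        6 * ((N : ℝ) * (norm (w a₁ * w a₂) * (Nat.gcd a₁ a₂ : ℝ) / ((a₁ : ℝ) + a₂))) := by
      intro a₁ a₂
      rw [norm_mul]
      ring
    simp only [expand, Finset.sum_add_distrib]
    congr 1
    · rw [sq, Finset.sum_mul_sum, Finset.mul_sum]
      exact Finset.sum_congr rfl fun a₁ _ => by rw [Finset.mul_sum]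
    · rw [show (6 : ℝ) * ((N : ℝ) * ∑ a₁ ∈ Icc 1 A, ∑ a₂ ∈ Icc 1 A,
          norm (w a₁ * w a₂) * (Nat.gcd a₁ a₂ : ℝ) / (a₁ + a₂)) =
          ∑ a₁ ∈ Icc 1 A, (6 * N : ℝ) * ∑ a₂ ∈ Icc 1 A,
          norm (w a₁ * w a₂) * (Nat.gcd a₁ a₂ : ℝ) / (a₁ + a₂) from by
        rw [← Finset.mul_sum]; ring]
      refine Finset.sum_congr rfl fun a₁ _ => ?_
      rw [Finset.mul_sum]
      refine Finset.sum_congr rfl fun a₂ _ => ?_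
      ring
  calc norm (∑ a₁ ∈ Icc 1 A, ∑ a₂ ∈ Icc 1 A, w a₁ * w a₂ * (T a₁ a₂ : ℂ))
      ≤ ∑ a₁ ∈ Icc 1 A, ∑ a₂ ∈ Icc 1 A, norm (w a₁) * norm (w a₂) *
          (3 + 6 * N * (Nat.gcd a₁ a₂ : ℝ) / ((a₁ : ℝ) + a₂)) := step1.trans step2
    _ = 3 * (∑ a ∈ Icc 1 A, norm (w a)) ^ 2 +
        6 * ((N : ℝ) * ∑ a₁ ∈ Icc 1 A, ∑ a₂ ∈ Icc 1 A,
          norm (w a₁ * w a₂) * (Nat.gcd a₁ a₂ : ℝ) / (a₁ + a₂)) := step3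
    _ ≤ 6 * ((∑ a ∈ Icc 1 A, norm (w a)) ^ 2 +
        (N : ℝ) * ∑ a₁ ∈ Icc 1 A, ∑ a₂ ∈ Icc 1 A,
          norm (w a₁ * w a₂) * (Nat.gcd a₁ a₂ : ℝ) / (a₁ + a₂)) := by
      have hX : (0 : ℝ) ≤ (∑ a ∈ Icc 1 A, norm (w a)) ^ 2 := sq_nonneg _
      linarith
end
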